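/- For every pair of coprime positive integers k, l, there is exactly one positive word in the free group F₂ on generators a', b' with abelianized image k·[a'] + l·[b'], up to cyclic permutation; equivalently, the number of distinct positive words of length k+l containing k letters a' and l letters b' whose cyclic equivalence class is the class realized by a simple closed transversal curve is exactly k+l. -/

import Mathlib

/-- If `u` and `v` commute and `|u|` divides `|v|`, then `v` is a power of `u`. -/
lemma comm_pow_aux {α : Type*} (u : List α) (hu : 0 < u.length) :
    ∀ N (v : List α), v.length ≤ N → u ++ v = v ++ u → u.length ∣ v.length →
      ∃ m, v = (List.replicate m u).flatten := by
  intro N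
  induction N with
  | zero =>
    intro v hN _ _
    have : v = [] := List.length_eq_zero_iff.mp (Nat.le_zero.mp hN)
    exact ⟨0, by simp [this]⟩
  | succ N ih =>
    intro v hN hcomm hdvd
    rcases eq_or_ne v [] with rfl | hv
    · exact ⟨0, by simp⟩
    · have hvpos : 0 < v.length := List.length_pos_iff.mpr hv
      have hvlen : u.length ≤ v.length := Nat.le_of_dvd hvpos hdvd
      have hu' : u = v.take u.length := by
        have h := congrArg (List.take u.length) hcomm
        rwa [List.take_left, List.take_append_of_le_length hvlen] at h
      set v' := v.drop u.length with hv'def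
      have hv' : v = u ++ v' := by
        conv_lhs => rw [← List.take_append_drop u.length v]
        rw [← hu']
      have hcomm' : u ++ v' = v' ++ u := by
        have h : u ++ (u ++ v') = (u ++ v') ++ u := by rw [← hv']; exact hcomm
        rw [List.append_assoc] at h
        exact List.append_cancel_left h
      have hlen2 : v.length = u.length + v'.length := by
        rw [hv', List.length_append]
      have hdvd' : u.length ∣ v'.length := by
        have := hdvd
        rw [hlen2] at this
        exact (Nat.dvd_add_right dvd_rfl).mp this
      have hlen' : v'.length ≤ N := by omega
      obtain ⟨m, hm⟩ := ih v' hlen' hcomm' hdvd'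
      exact ⟨m + 1, by rw [hv', hm]; simp [List.replicate_succ]⟩

lemma rot_mul {α : Type*} (w : List α) (d : ℕ) (h : w.rotate d = w) :
    ∀ m, w.rotate (m * d) = w := by
  intro m
  induction m with
  | zero => simp
  | succ m ih =>
    rw [Nat.succ_mul, ← List.rotate_rotate, ih, h]

/-- For coprime k, l > 0, any word with k letters a' (true) and l letters b' (false)
has exactly k + l distinct cyclic rotations: its cyclic equivalence class consists of
exactly k + l distinct words. -/
theorem stmt8 (k l : ℕ) (hk : 0 < k) (hl : 0 < l) (hkl : Nat.Coprime k l)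
    (w : List Bool) (hkcount : w.count true = k) (hlcount : w.count false = l) :
    ((Finset.range (k + l)).image (fun i => w.rotate i)).card = k + l := by
  set n := k + l with hn
  have hclen : ∀ t : List Bool, t.count true + t.count false = t.length := by
    intro t
    induction t with
    | nil => simp
    | cons a t ih => cases a <;> simp [List.count_cons] <;> omega
  have hlen : w.length = n := by have := hclen w; omega
  -- primitivity
  have prim : ∀ d, w.rotate d = w → 0 < d → d < n → False := by
    intro d hd hd0 hdn
    set g := Nat.gcd d n with hg
    have hgd : g ≤ d := Nat.gcd_le_left _ hd0
    have hgn : g < n := lt_of_le_of_lt hgd hdn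
    have hg0 : 0 < g := Nat.gcd_pos_of_pos_left _ hd0
    obtain ⟨m, _, hm⟩ := Nat.exists_mul_mod_eq_gcd (k := n) (n := d) hgn
    have hrg : w.rotate g = w := by
      have h1 : w.rotate (d * m) = w := by rw [mul_comm]; exact rot_mul w d hd m
      have h2 : w.rotate (d * m % n) = w.rotate (d * m) := by
        rw [← hlen]; exact List.rotate_mod w (d * m)
      rw [show g = d * m % n from hg.trans hm.symm, h2, h1]
    have hgdvdn : g ∣ n := Nat.gcd_dvd_right d n
    have hgle : g ≤ w.length := by omega
    have hrgeq : w.drop g ++ w.take g = w := by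
      rw [← List.rotate_eq_drop_append_take hgle]; exact hrg
    set u := w.take g with hu
    set v := w.drop g with hv
    have hulen : u.length = g := by
      simp [hu, List.length_take, hlen]; omega
    have hvlen : v.length = n - g := by simp [hv, List.length_drop, hlen]
    have hcomm : u ++ v = v ++ u := (List.take_append_drop g w).trans hrgeq.symm
    have hdvd : u.length ∣ v.length := by
      rw [hulen, hvlen]; exact Nat.dvd_sub hgdvdn dvd_rfl
    obtain ⟨m', hm'⟩ := comm_pow_aux u (by omega) v.length v le_rfl hcomm hdvd
    have hct : ∀ a : Bool, w.count a = (m' + 1) * u.count a := by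
      intro a
      conv_lhs => rw [← List.take_append_drop g w]
      rw [List.count_append, ← hu, ← hv, hm', List.count_flatten]
      simp [List.map_replicate, List.sum_replicate, smul_eq_mul]
      ring
    have h1 : (m' + 1) ∣ k := ⟨u.count true, by rw [← hkcount, hct true]⟩
    have h2 : (m' + 1) ∣ l := ⟨u.count false, by rw [← hlcount, hct false]⟩
    have hone : (m' + 1) ∣ 1 := by
      have h3 := Nat.dvd_gcd h1 h2
      rwa [Nat.coprime_iff_gcd_eq_one.mp hkl] at h3
    have hm0 : m' = 0 := by have := Nat.le_of_dvd one_pos hone; omega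
    have hvl : v.length = m' * g := by
      rw [hm']; simp [List.length_flatten, List.map_replicate, List.sum_replicate, hulen]
    rw [hm0, Nat.zero_mul] at hvl
    omega
  -- injectivity of rotations
  have key : ∀ i j : ℕ, i < n → j < n → i ≤ j → w.rotate i = w.rotate j → i = j := by
    intro i j hi hj hij heq
    have h1 : (w.rotate (j - i)).rotate i = w.rotate j := by
      rw [List.rotate_rotate]; congr 1; omega
    rw [← heq] at h1
    have h2 : w.rotate (j - i) = w := List.rotate_injective i h1
    by_contra hne
    exact prim (j - i) h2 (by omega) (by omega)
  rw [Finset.card_image_of_injOn, Finset.card_range]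
  intro i hi j hj hij
  simp only [Finset.coe_range, Set.mem_Iio] at hi hj
  rcases le_total i j with h | h
  · exact key i j hi hj h hij
  · exact (key j i hj hi h hij.symm).symm
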